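/- Assume CH. Then the forcing ℚ satisfies the following strong ω₂-chain condition: for every family (q_α)_{α<ω₂} of conditions in ℚ, there is A ⊆ ω₂ of cardinality ω₂ such that every finitely many conditions q_{α₁},...,q_{α_m} with α₁ < ⋯ < α_m in A have a common lower bound in ℚ. In particular, ℚ has no antichain of cardinality ω₂. -/

import Mathlib

open Ordinal Cardinal

/-- A condition in the forcing `ℚ`: `D` a countable subset of `ω₂` and `F` a countable set
of (graphs of) partial functions from `ω` to `D`, containing all singletons. -/
structure QCond where
  D : Set Ordinal
  F : Set (Set (ℕ × Ordinal))
  hDc : D.Countable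
  hD : ∀ ξ ∈ D, ξ < (Cardinal.aleph 2).ord
  hFc : F.Countable
  hdom : ∀ f ∈ F, ∀ x ∈ f, x.2 ∈ D
  hfun : ∀ f ∈ F, ∀ x ∈ f, ∀ y ∈ f, x.1 = y.1 → x.2 = y.2
  hsing : ∀ i : ℕ, ∀ ξ ∈ D, ({(i, ξ)} : Set (ℕ × Ordinal)) ∈ F

/-- The ordering on `ℚ`: `p ≤ q` iff `D_p ⊇ D_q`, `F_p ⊇ F_q`, and every `f ∈ F_p` has some
`g ∈ F_q` with `graph(f) ∩ (ω × D_q) ⊆ graph(g)`. -/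
def QLe (p q : QCond) : Prop :=
  q.D ⊆ p.D ∧ q.F ⊆ p.F ∧
    ∀ f ∈ p.F, ∃ g ∈ q.F, ∀ x ∈ f, x.2 ∈ q.D → x ∈ g

/-- `q₁` and `q₂` are isomorphic conditions: an order-preserving bijection `e : D₁ → D₂`
fixing `D₁ ∩ D₂` pointwise, with `f ∈ F₁ ↔ e[f] ∈ F₂`. -/
def QIso (q₁ q₂ : QCond) : Prop :=
  ∃ e : Ordinal → Ordinal,
    Set.BijOn e q₁.D q₂.D ∧
    (∀ ξ ∈ q₁.D, ∀ η ∈ q₁.D, (ξ ≤ η ↔ e ξ ≤ e η)) ∧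
    (∀ ξ ∈ q₁.D ∩ q₂.D, e ξ = ξ) ∧
    (∀ f : Set (ℕ × Ordinal), (∀ x ∈ f, x.2 ∈ q₁.D) →
      (f ∈ q₁.F ↔ (fun x : ℕ × Ordinal => (x.1, e x.2)) '' f ∈ q₂.F))


universe u v

noncomputable section Helpers

/-- Enumerate a countable set by a function `ℕ → Option X`. -/
lemma exists_enum {X : Type*} {s : Set X} (hs : s.Countable) :
    ∃ σ : ℕ → Option X, s = {x | some x ∈ Set.range σ} := by
  rcases s.eq_empty_or_nonempty with h | h
  · refine ⟨fun _ => none, ?_⟩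
    ext x; simp [h]
  · obtain ⟨f, hf⟩ := Set.Countable.exists_eq_range hs h
    refine ⟨fun n => some (f n), ?_⟩
    ext x
    simp only [Set.mem_setOf_eq, Set.mem_range, hf]
    constructor
    · rintro ⟨n, rfl⟩; exact ⟨n, rfl⟩
    · rintro ⟨n, hn⟩; exact ⟨n, Option.some.inj hn⟩

/-- The number of countable subsets of `X` is at most `(#X + 1) ^ ℵ₀`. -/
lemma mk_countable_le (X : Type v) :
    #{s : Set X // s.Countable} ≤ (#X + 1) ^ (ℵ₀ : Cardinal.{v}) := by
  have hinj : Function.Injective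
      (fun s : {s : Set X // s.Countable} => (exists_enum s.2).choose) := by
    intro s t hst
    apply Subtype.ext
    have hs := (exists_enum s.2).choose_spec
    have ht := (exists_enum t.2).choose_spec
    simp only at hst
    rw [hs, ht, hst]
  have h1 : #{s : Set X // s.Countable} ≤ #(ℕ → Option X) := mk_le_of_injective hinj
  have e : (ℕ → Option X) ≃ (ULift.{v} ℕ → Option X) :=
    Equiv.arrowCongr Equiv.ulift.symm (Equiv.refl _)
  calc #{s : Set X // s.Countable} ≤ #(ℕ → Option X) := h1
    _ = #(ULift.{v} ℕ → Option X) := mk_congr e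
    _ = #(Option X) ^ #(ULift.{v} ℕ) := (power_def _ _).symm
    _ = (#X + 1) ^ (ℵ₀ : Cardinal.{v}) := by rw [mk_option, mk_uLift, mk_nat, lift_aleph0]

/-- Under CH, `ℵ₁ ^ ℵ₀ = ℵ₁`. -/
lemma aleph1_power_aleph0 (CH : Cardinal.continuum.{v} = Cardinal.aleph 1) :
    (Cardinal.aleph.{v} 1) ^ (ℵ₀ : Cardinal.{v}) = Cardinal.aleph 1 := by
  have h2 : Cardinal.aleph.{v} 1 = 2 ^ (ℵ₀ : Cardinal.{v}) := by
    rw [← CH]; rfl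
  rw [h2, ← power_mul, aleph0_mul_aleph0]

lemma aleph1_add_one : (Cardinal.aleph.{v} 1) + 1 = Cardinal.aleph 1 := by
  rw [add_one_eq (aleph0_le_aleph 1)]

/-- CH transfers between universes. -/
lemma CH_transfer (CH : Cardinal.continuum.{u} = Cardinal.aleph 1) :
    Cardinal.continuum.{v} = Cardinal.aleph 1 := by
  have h := congrArg (Cardinal.lift.{v}) CH
  rw [Cardinal.lift_continuum, Cardinal.lift_aleph, Ordinal.lift_one] at h
  have h2 : Cardinal.lift.{u} (Cardinal.continuum.{v}) =
      Cardinal.lift.{u} (Cardinal.aleph.{v} 1) := by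
    rw [Cardinal.lift_continuum, Cardinal.lift_aleph, Ordinal.lift_one]
    exact h
  exact Cardinal.lift_injective h2

lemma aleph_two_eq_succ : Cardinal.aleph.{v} 2 = Order.succ (Cardinal.aleph.{v} 1) := by
  rw [← aleph_succ]
  norm_num

lemma lift_aleph_two : Cardinal.lift.{v} (Cardinal.aleph.{u} 2) = Cardinal.aleph 2 := by
  rw [Cardinal.lift_aleph]
  norm_num

lemma aleph_one_lt_aleph_two : Cardinal.aleph.{v} 1 < Cardinal.aleph 2 :=
  aleph_lt_aleph.2 one_lt_two


/-- The set of upper bounds. -/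
def ubSet (s : Set Ordinal.{u}) : Set Ordinal.{u} := {b | ∀ x ∈ s, x ≤ b}

/-- Least upper-bound-ish: the least ordinal that bounds `s`, if any bound exists. -/
def ubd (s : Set Ordinal.{u}) : Ordinal.{u} := sInf (ubSet s)

lemma ubd_spec {s : Set Ordinal.{u}} (h : (ubSet s).Nonempty) : ∀ x ∈ s, x ≤ ubd s :=
  csInf_mem h

lemma ubd_lt {s : Set Ordinal.{u}} {o b : Ordinal.{u}} (hb : b ∈ ubSet s) (hbo : b < o) :
    ubd s < o :=
  lt_of_le_of_lt (csInf_le (OrderBot.bddBelow _) hb) hbo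

lemma ubd_mono {s t : Set Ordinal.{u}} (hst : s ⊆ t) (h : (ubSet t).Nonempty) :
    ubd s ≤ ubd t :=
  csInf_le_csInf (OrderBot.bddBelow _) h (fun b hb x hx => hb x (hst hx))

/-- A set of ordinals below `o` of cardinality less than `cof o` is bounded below `o`. -/
lemma exists_ub {o : Ordinal.{u}} {s : Set Ordinal.{u}} (hsub : s ⊆ Set.Iio o)
    (hcard : #s < Cardinal.lift.{u+1} o.cof) : ∃ b, b ∈ ubSet s ∧ b < o := by
  have hsm : Small.{u} s := small_subset hsub
  rcases Set.eq_empty_or_nonempty s with rfl | hne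
  · refine ⟨0, by simp [ubSet], ?_⟩
    rcases eq_zero_or_pos o with rfl | h
    · exfalso
      simp [Ordinal.cof_zero] at hcard
    · exact h
  · have hneS : Nonempty (Shrink.{u} s) := by
      have : Nonempty s := hne.to_subtype
      exact (equivShrink s).symm.nonempty
    set f : Shrink.{u} s → Ordinal.{u} := fun i => ((equivShrink s).symm i).1 with hf
    have hcard2 : #(Shrink.{u} s) < o.cof := by
      have := Cardinal.lift_mk_shrink'.{u+1, u} s
      rw [← Cardinal.lift_lt.{_, u+1}]
      calc Cardinal.lift.{u+1} #(Shrink.{u} s)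
          = Cardinal.lift.{u} #s := by
            rw [← this, Cardinal.lift_umax.{u, u+1}]
        _ = #s := Cardinal.lift_id'.{u, u+1} _
        _ < Cardinal.lift.{u+1} o.cof := hcard
    have hfo : ∀ i, f i < o := fun i => hsub ((equivShrink s).symm i).2
    have hsup : iSup f < o := Ordinal.iSup_lt_ord hcard2 hfo
    refine ⟨iSup f, ?_, hsup⟩
    intro x hx
    have : x = f (equivShrink s ⟨x, hx⟩) := by simp [hf]
    rw [this]
    exact Ordinal.le_iSup f _

end Helpers

noncomputable section Core

open Ordinal Cardinal Set

/-- The index subtype: ordinals below `ω₂`. -/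
abbrev SubT : Type (u+1) := {o : Ordinal.{u} // o < (Cardinal.aleph.{u} 2).ord}

variable (q : SubT.{0} → QCond)

/-- `α` is a closure point: all sets indexed below `α` live below `α`. -/
def Good (α : SubT.{0}) : Prop :=
  ∀ a : SubT.{0}, a.1 < α.1 → ∀ ξ ∈ (q a).D, ξ < α.1

/-- The part of `D_α` below `α` lives below `β`. -/
def Tail (β α : SubT.{0}) : Prop :=
  ∀ ξ ∈ (q α).D, ξ < α.1 → ξ < β.1

lemma two_eq_succ_one : (2 : Ordinal.{u}) = Order.succ 1 := by
  rw [← Ordinal.add_one_eq_succ]; norm_num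

lemma cof_omega2 : ((Cardinal.aleph.{0} 2).ord).cof = Cardinal.aleph.{0} 2 := by
  have h : Cardinal.IsRegular (Cardinal.aleph.{0} 2) := by
    rw [two_eq_succ_one]; exact isRegular_aleph_succ 1
  exact h.cof_eq

lemma omega2_isLimit : Order.IsSuccLimit ((Cardinal.aleph.{0} 2).ord) :=
  Cardinal.isSuccLimit_ord (aleph0_le_aleph 2)

lemma omega1_isLimit : Order.IsSuccLimit ((Cardinal.aleph.{0} 1).ord) :=
  Cardinal.isSuccLimit_ord (aleph0_le_aleph 1)

lemma cof_omega1 : ((Cardinal.aleph.{0} 1).ord).cof = Cardinal.aleph.{0} 1 :=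
  isRegular_aleph_one.cof_eq

/-- Sets of size `≤ ℵ₁` below `ω₂` are bounded. -/
lemma exists_ub_omega2 {s : Set Ordinal.{0}} (hsub : s ⊆ Set.Iio (Cardinal.aleph.{0} 2).ord)
    (hcard : #s ≤ Cardinal.aleph.{1} 1) :
    ∃ b, b ∈ ubSet s ∧ b < (Cardinal.aleph.{0} 2).ord := by
  apply exists_ub hsub
  rw [cof_omega2, lift_aleph_two]
  exact lt_of_le_of_lt hcard aleph_one_lt_aleph_two

lemma exists_ub_omega1 {s : Set Ordinal.{0}} (hsub : s ⊆ Set.Iio (Cardinal.aleph.{0} 1).ord)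
    (hcard : #s ≤ (ℵ₀ : Cardinal.{1})) :
    ∃ b, b ∈ ubSet s ∧ b < (Cardinal.aleph.{0} 1).ord := by
  apply exists_ub hsub
  rw [cof_omega1, Cardinal.lift_aleph, Ordinal.lift_one]
  exact lt_of_le_of_lt hcard ((aleph0_le_aleph 1).lt_of_ne (by
    simpa using (Cardinal.aleph0_lt_aleph_one).ne))

lemma card_le_aleph1_of_lt {x : Ordinal.{0}} (hx : x < (Cardinal.aleph.{0} 2).ord) :
    Cardinal.lift.{1} x.card ≤ Cardinal.aleph.{1} 1 := by
  have h1 : x.card < Cardinal.aleph.{0} 2 := Cardinal.lt_ord.1 hx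
  have h2 : x.card ≤ Cardinal.aleph.{0} 1 := by
    rw [aleph_two_eq_succ, Order.lt_succ_iff] at h1; exact h1
  calc Cardinal.lift.{1} x.card ≤ Cardinal.lift.{1} (Cardinal.aleph.{0} 1) :=
        Cardinal.lift_le.2 h2
    _ = Cardinal.aleph.{1} 1 := by rw [Cardinal.lift_aleph, Ordinal.lift_one]

lemma mk_D_le {c : QCond} : #c.D ≤ (ℵ₀ : Cardinal.{1}) :=
  Cardinal.le_aleph0_iff_set_countable.2 c.hDc

/-- Key combinatorial lemma: there is `β < ω₂` such that unboundedly many indices `α` are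
closure points whose `D_α` below `α` lives below `β`. -/
lemma lemmaA :
    ∃ β : SubT.{0}, ∀ b : Ordinal.{0}, b < (Cardinal.aleph.{0} 2).ord →
      ∃ α : SubT.{0}, b < α.1 ∧ Good q α ∧ Tail q β α := by
  classical
  set Ω : Ordinal.{0} := (Cardinal.aleph.{0} 2).ord with hΩ
  by_contra hcon
  push_neg at hcon
  -- Every potential root `β` admits a bound for the good indices with tail below `β`.
  have Hc : ∀ β : SubT.{0}, ∃ b, b < Ω ∧ ∀ α : SubT.{0}, Good q α → Tail q β α → α.1 ≤ b := by
    intro β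
    obtain ⟨b, hb, hball⟩ := hcon β
    refine ⟨b, hb, fun α hg ht => ?_⟩
    by_contra hle
    exact (hball α (lt_of_not_ge hle) hg) ht
  -- bound functions
  set hB : Ordinal.{0} → Ordinal.{0} :=
    fun y => if hy : y < Ω then (Hc ⟨y, hy⟩).choose else 0 with hhB
  have hB_lt : ∀ {y}, y < Ω → hB y < Ω := by
    intro y hy; simp only [hhB, dif_pos hy]; exact (Hc ⟨y, hy⟩).choose_spec.1
  have hB_bound : ∀ {y} (hy : y < Ω), ∀ α : SubT.{0},
      Good q α → Tail q ⟨y, hy⟩ α → α.1 ≤ hB y := by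
    intro y hy α hg ht
    simp only [hhB, dif_pos hy]
    exact (Hc ⟨y, hy⟩).choose_spec.2 α hg ht
  set sD : Ordinal.{0} → Ordinal.{0} :=
    fun y => if hy : y < Ω then ubd ((q ⟨y, hy⟩).D) else 0 with hsD
  have D_sub : ∀ (c : QCond), c.D ⊆ Set.Iio Ω := fun c ξ hξ => (c.hD ξ hξ)
  have sD_lt : ∀ {y}, y < Ω → sD y < Ω := by
    intro y hy
    obtain ⟨b, hb1, hb2⟩ := exists_ub_omega2 (D_sub (q ⟨y, hy⟩))
      (le_trans mk_D_le (aleph0_le_aleph 1))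
    simp only [hsD, dif_pos hy]
    exact ubd_lt hb1 hb2
  have sD_spec : ∀ {y} (hy : y < Ω), ∀ ξ ∈ (q ⟨y, hy⟩).D, ξ ≤ sD y := by
    intro y hy ξ hξ
    obtain ⟨b, hb1, hb2⟩ := exists_ub_omega2 (D_sub (q ⟨y, hy⟩))
      (le_trans mk_D_le (aleph0_le_aleph 1))
    simp only [hsD, dif_pos hy]
    exact ubd_spec ⟨b, hb1⟩ ξ hξ
  set G : Ordinal.{0} → Ordinal.{0} := fun y => max y (max (hB y) (sD y)) with hG
  have G_lt : ∀ {y}, y < Ω → G y < Ω := by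
    intro y hy
    exact max_lt hy (max_lt (hB_lt hy) (sD_lt hy))
  set g : Ordinal.{0} → Ordinal.{0} := fun x => ubd (G '' Set.Iic x) + 1 with hg
  have image_sub : ∀ {x}, x < Ω → G '' Set.Iic x ⊆ Set.Iio Ω := by
    rintro x hx ξ ⟨y, hy, rfl⟩
    exact G_lt (lt_of_le_of_lt hy hx)
  have image_card : ∀ x : Ordinal.{0}, x < Ω → #(G '' Set.Iic x) ≤ Cardinal.aleph.{1} 1 := by
    intro x hx
    have h1 : #(G '' Set.Iic x) ≤ #(Set.Iic x) := mk_image_le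
    have h2 : Set.Iic x = Set.Iio (Order.succ x) := by
      ext z; simp [Order.lt_succ_iff]
    have h3 : #(Set.Iic x) = Cardinal.lift.{1} (Order.succ x).card := by
      rw [h2]; exact Cardinal.mk_Iio_ordinal _
    have h4 : Order.succ x < Ω := omega2_isLimit.succ_lt hx
    exact h1.trans (h3 ▸ card_le_aleph1_of_lt h4)
  have image_ubSet : ∀ {x}, x < Ω → ∃ b, b ∈ ubSet (G '' Set.Iic x) ∧ b < Ω := by
    intro x hx
    exact exists_ub_omega2 (image_sub hx) (image_card x hx)
  have g_lt : ∀ {x}, x < Ω → g x < Ω := by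
    intro x hx
    obtain ⟨b, hb1, hb2⟩ := image_ubSet hx
    have : ubd (G '' Set.Iic x) < Ω := ubd_lt hb1 hb2
    have := omega2_isLimit.succ_lt this
    rwa [← Ordinal.add_one_eq_succ] at this
  have G_le_g : ∀ {x y}, x < Ω → y ≤ x → G y < g x := by
    intro x y hx hy
    obtain ⟨b, hb1, hb2⟩ := image_ubSet hx
    have h1 : G y ≤ ubd (G '' Set.Iic x) :=
      ubd_spec ⟨b, hb1⟩ _ (Set.mem_image_of_mem G hy)
    exact lt_of_le_of_lt h1 (lt_add_one _)
  have g_gt : ∀ {x}, x < Ω → x < g x := by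
    intro x hx
    exact lt_of_le_of_lt (le_max_left x _) (G_le_g hx le_rfl)
  have g_mono : ∀ {x x'}, x ≤ x' → x' < Ω → g x ≤ g x' := by
    intro x x' hxx hx'
    obtain ⟨b, hb1, hb2⟩ := image_ubSet hx'
    have : ubd (G '' Set.Iic x) ≤ ubd (G '' Set.Iic x') :=
      ubd_mono (Set.image_mono (Set.Iic_subset_Iic.2 hxx)) ⟨b, hb1⟩
    simpa [hg] using add_le_add_right this 1
  have gIter_lt : ∀ (n : ℕ) {a}, a < Ω → g^[n] a < Ω := by
    intro n
    induction n with
    | zero => intro a ha; simpa using ha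
    | succ n ih =>
      intro a ha
      rw [Function.iterate_succ_apply']
      exact g_lt (ih ha)
  have nfp_closed : ∀ {a x}, a < Ω → x < nfp g a → g x < nfp g a := by
    intro a x ha hx
    obtain ⟨n, hn⟩ := Ordinal.lt_nfp_iff.1 hx
    have h1 : g x ≤ g (g^[n] a) := g_mono hn.le (gIter_lt n ha)
    have h2 : g (g^[n] a) = g^[n+1] a := (Function.iterate_succ_apply' g n a).symm
    have h3 : g^[n+1] a < g^[n+2] a := by
      rw [Function.iterate_succ_apply' g (n+1)]
      exact g_gt (gIter_lt (n+1) ha)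
    calc g x ≤ g^[n+1] a := h1.trans_eq h2
      _ < g^[n+2] a := h3
      _ ≤ nfp g a := Ordinal.iterate_le_nfp g a (n+2)
  -- the increasing ω₁-sequence of closure points
  set e : Ordinal.{0} → Ordinal.{0} :=
    Ordinal.lt_wf.fix (fun i rec =>
      nfp g (ubd (Set.range (fun j : ↥(Set.Iio i) => rec j.1 j.2)) + 1)) with he
  have e_def : ∀ i, e i = nfp g (ubd (e '' Set.Iio i) + 1) := by
    intro i
    rw [he, WellFounded.fix_eq]
    congr 2
    rw [Set.image_eq_range]
  set ω1 : Ordinal.{0} := (Cardinal.aleph.{0} 1).ord with hω1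
  have ω1_lt_Ω : ω1 < Ω := by
    rw [hω1, hΩ]
    exact Cardinal.ord_lt_ord.2 aleph_one_lt_aleph_two
  have e_lt : ∀ i, i ≤ ω1 → e i < Ω := by
    intro i
    induction i using Ordinal.induction with
    | h i IH =>
      intro hi
      have hsub : e '' Set.Iio i ⊆ Set.Iio Ω := by
        rintro ξ ⟨j, hj, rfl⟩
        exact IH j hj (le_of_lt (lt_of_lt_of_le hj hi))
      have hcard : #(e '' Set.Iio i) ≤ Cardinal.aleph.{1} 1 := by
        have h1 : #(e '' Set.Iio i) ≤ #(Set.Iio i) := mk_image_le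
        have h2 : #(Set.Iio i) = Cardinal.lift.{1} i.card := Cardinal.mk_Iio_ordinal i
        exact h1.trans (h2 ▸ card_le_aleph1_of_lt (lt_of_le_of_lt hi ω1_lt_Ω))
      obtain ⟨b, hb1, hb2⟩ := exists_ub_omega2 hsub hcard
      have hubd : ubd (e '' Set.Iio i) + 1 < Ω := by
        have := omega2_isLimit.succ_lt (ubd_lt hb1 hb2)
        rwa [← Ordinal.add_one_eq_succ] at this
      rw [e_def i]
      refine Ordinal.nfp_lt_ord ?_ (fun x hx => g_lt hx) hubd
      rw [hΩ, cof_omega2]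
      exact (aleph0_lt_aleph_one).trans aleph_one_lt_aleph_two
  have e_base : ∀ i, i ≤ ω1 → (∃ b, b ∈ ubSet (e '' Set.Iio i) ∧ b < Ω) := by
    intro i hi
    refine exists_ub_omega2 ?_ ?_
    · rintro ξ ⟨j, hj, rfl⟩
      exact e_lt j (le_of_lt (lt_of_lt_of_le hj hi))
    · have h1 : #(e '' Set.Iio i) ≤ #(Set.Iio i) := mk_image_le
      have h2 : #(Set.Iio i) = Cardinal.lift.{1} i.card := Cardinal.mk_Iio_ordinal i
      exact h1.trans (h2 ▸ card_le_aleph1_of_lt (lt_of_le_of_lt hi ω1_lt_Ω))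
  have e_base_lt : ∀ i, i ≤ ω1 → ubd (e '' Set.Iio i) + 1 < Ω := by
    intro i hi
    obtain ⟨b, hb1, hb2⟩ := e_base i hi
    have := omega2_isLimit.succ_lt (ubd_lt hb1 hb2)
    rwa [← Ordinal.add_one_eq_succ] at this
  have e_strict : ∀ {j i}, j < i → i ≤ ω1 → e j < e i := by
    intro j i hj hi
    have h1 : e j ≤ ubd (e '' Set.Iio i) :=
      ubd_spec ⟨(e_base i hi).choose, (e_base i hi).choose_spec.1⟩ _
        (Set.mem_image_of_mem e hj)
    calc e j ≤ ubd (e '' Set.Iio i) := h1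
      _ < ubd (e '' Set.Iio i) + 1 := lt_add_one _
      _ ≤ nfp g _ := Ordinal.le_nfp g _
      _ = e i := (e_def i).symm
  have e_mono : ∀ {j i}, j ≤ i → i ≤ ω1 → e j ≤ e i := by
    intro j i hj hi
    rcases lt_or_eq_of_le hj with h | rfl
    · exact (e_strict h hi).le
    · exact le_rfl
  -- the closure point γ of cofinality ω₁
  set γ : Ordinal.{0} := sSup (e '' Set.Iio ω1) with hγ
  have hsub1 : e '' Set.Iio ω1 ⊆ Set.Iio Ω := by
    rintro ξ ⟨j, hj, rfl⟩
    exact e_lt j hj.le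
  have hcard1 : #(e '' Set.Iio ω1) ≤ Cardinal.aleph.{1} 1 := by
    have h1 : #(e '' Set.Iio ω1) ≤ #(Set.Iio ω1) := mk_image_le
    have h2 : #(Set.Iio ω1) = Cardinal.lift.{1} ω1.card := Cardinal.mk_Iio_ordinal ω1
    exact h1.trans (h2 ▸ card_le_aleph1_of_lt ω1_lt_Ω)
  have γ_bddAbove : BddAbove (e '' Set.Iio ω1) := by
    obtain ⟨b, hb1, _⟩ := exists_ub_omega2 hsub1 hcard1
    exact ⟨b, fun ξ hξ => hb1 ξ hξ⟩
  have γ_ne : (e '' Set.Iio ω1).Nonempty :=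
    ⟨e 0, Set.mem_image_of_mem e (omega1_isLimit.pos)⟩
  have e_lt_γ : ∀ {i}, i < ω1 → e i < γ := by
    intro i hi
    have h1 : Order.succ i < ω1 := omega1_isLimit.succ_lt hi
    have h2 : e i < e (Order.succ i) := e_strict (Order.lt_succ i) h1.le
    exact lt_of_lt_of_le h2 (le_csSup γ_bddAbove (Set.mem_image_of_mem e h1))
  have γ_lt_Ω : γ < Ω := by
    obtain ⟨b, hb1, hb2⟩ := exists_ub_omega2 hsub1 hcard1
    exact lt_of_le_of_lt (csSup_le γ_ne (fun ξ hξ => hb1 ξ hξ)) hb2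
  have lt_γ_iff : ∀ {x}, x < γ → ∃ i, i < ω1 ∧ x < e i := by
    intro x hx
    obtain ⟨y, hy, hxy⟩ := (lt_csSup_iff γ_bddAbove γ_ne).1 hx
    obtain ⟨i, hi, rfl⟩ := hy
    exact ⟨i, hi, hxy⟩
  have γ_closed : ∀ {x}, x < γ → g x < γ := by
    intro x hx
    obtain ⟨i, hi, hxe⟩ := lt_γ_iff hx
    have h1 : e i = nfp g (ubd (e '' Set.Iio i) + 1) := e_def i
    have h2 : g x < e i := by
      rw [h1]
      exact nfp_closed (e_base_lt i hi.le) (h1 ▸ hxe)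
    exact h2.trans (e_lt_γ hi)
  -- countable subsets of γ are bounded strictly below γ
  have ctble_bounded : ∀ (T : Set Ordinal.{0}), T.Countable → T ⊆ Set.Iio γ →
      ∃ b, b < γ ∧ ∀ x ∈ T, x < b := by
    intro T hTc hTsub
    set I : Set Ordinal.{0} := (fun x : ↥T => (lt_γ_iff (hTsub x.2)).choose) '' Set.univ with hI
    have hIsub : I ⊆ Set.Iio ω1 := by
      rintro ξ ⟨x, _, rfl⟩
      exact (lt_γ_iff (hTsub x.2)).choose_spec.1
    have hIcard : #I ≤ (ℵ₀ : Cardinal.{1}) := by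
      have h1 : #I ≤ #(↥T) := by
        rw [hI, Set.image_univ]
        exact Cardinal.mk_range_le
      exact h1.trans (Cardinal.le_aleph0_iff_set_countable.2 hTc)
    obtain ⟨j, hj1, hj2⟩ := exists_ub_omega1 hIsub hIcard
    refine ⟨e j, e_lt_γ hj2, ?_⟩
    intro x hx
    have h1 : x < e ((lt_γ_iff (hTsub hx)).choose) := by
      have := (lt_γ_iff (hTsub (show x ∈ T from hx))).choose_spec.2
      exact this
    have h2 : (lt_γ_iff (hTsub hx)).choose ≤ j :=
      hj1 _ ⟨⟨x, hx⟩, Set.mem_univ _, rfl⟩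
    exact lt_of_lt_of_le h1 (e_mono h2 hj2.le)
  -- derive the contradiction
  have γSub : SubT.{0} := ⟨γ, γ_lt_Ω⟩
  have hDγ : ((q ⟨γ, γ_lt_Ω⟩).D ∩ {ξ | ξ < γ}).Countable :=
    Set.Countable.mono Set.inter_subset_left (q ⟨γ, γ_lt_Ω⟩).hDc
  obtain ⟨b, hbγ, hb⟩ := ctble_bounded _ hDγ (fun ξ hξ => hξ.2)
  have hbΩ : b < Ω := hbγ.trans γ_lt_Ω
  have hGood : Good q ⟨γ, γ_lt_Ω⟩ := by
    intro a ha ξ hξ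
    have h1 : ξ ≤ sD a.1 := by
      have := sD_spec a.2 ξ (by rwa [Subtype.coe_eta])
      exact this
    have h2 : sD a.1 ≤ G a.1 := le_trans (le_max_right _ _) (le_max_right _ _)
    have h3 : G a.1 < g a.1 := G_le_g a.2 le_rfl
    have h4 : g a.1 < γ := γ_closed ha
    exact lt_of_le_of_lt (h1.trans h2) (h3.trans h4)
  have hTail : Tail q ⟨b, hbΩ⟩ ⟨γ, γ_lt_Ω⟩ := by
    intro ξ hξ hξγ
    exact hb ξ ⟨hξ, hξγ⟩
  have hle : γ ≤ hB b := hB_bound hbΩ _ hGood hTail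
  have hlt : hB b < γ := by
    have h1 : hB b ≤ G b := le_trans (le_max_left _ _) (le_max_right _ _)
    have h2 : G b < g b := G_le_g hbΩ le_rfl
    exact lt_of_le_of_lt h1 (h2.trans (γ_closed hbγ))
  exact absurd hle (not_le.2 hlt)

lemma mk_fun_nat_option (X : Type v) :
    #(ℕ → Option X) = (#X + 1) ^ (ℵ₀ : Cardinal.{v}) := by
  have e : (ℕ → Option X) ≃ (ULift.{v} ℕ → Option X) :=
    Equiv.arrowCongr Equiv.ulift.symm (Equiv.refl _)
  calc #(ℕ → Option X) = #(ULift.{v} ℕ → Option X) := mk_congr e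
    _ = #(Option X) ^ #(ULift.{v} ℕ) := (power_def _ _).symm
    _ = (#X + 1) ^ (ℵ₀ : Cardinal.{v}) := by rw [mk_option, mk_uLift, mk_nat, lift_aleph0]

lemma mk_SubT : #(SubT.{u}) = Cardinal.aleph.{u+1} 2 := by
  have h1 : #(SubT.{u}) = #(Set.Iio (Cardinal.aleph.{u} 2).ord) :=
    mk_congr (Equiv.subtypeEquivRight (fun _ => Iff.rfl))
  rw [h1, Cardinal.mk_Iio_ordinal, Cardinal.card_ord, lift_aleph_two]

/-- Restriction of a partial function to the rectangle `ℕ × Iio β`. -/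
def cutF (β : SubT.{0}) (f : Set (ℕ × Ordinal.{0})) : Set (ℕ × ↥(Set.Iio β.1)) :=
  {p | ((p.1 : ℕ), (p.2.1 : Ordinal.{0})) ∈ f}

/-- The type of countable subsets of `ℕ × Iio β`. -/
def STy (β : SubT.{0}) : Type 1 := {t : Set (ℕ × ↥(Set.Iio β.1)) // t.Countable}

lemma cut_countable (β : SubT.{0}) {c : QCond} {f : Set (ℕ × Ordinal.{0})}
    (hf : f ∈ c.F) : (cutF β f).Countable := by
  rw [Set.countable_iff_exists_injective]
  refine ⟨fun p => p.1.1, ?_⟩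
  rintro ⟨p, hp⟩ ⟨p', hp'⟩ h
  simp only at h
  have h2 := c.hfun _ hf _ hp _ hp' h
  simp only at h2
  exact Subtype.ext (Prod.ext h (Subtype.ext h2))

lemma strace_countable (q : SubT.{0} → QCond) (β : SubT.{0}) (α : SubT.{0}) :
    ((Subtype.val : STy β → Set (ℕ × ↥(Set.Iio β.1))) ⁻¹' (cutF β '' (q α).F)).Countable :=
  Set.Countable.preimage (Set.Countable.image (q α).hFc (cutF β)) Subtype.val_injective

/-- A code for the trace of `F_α` on `ℕ × Iio β`. -/
def codeF (q : SubT.{0} → QCond) (β : SubT.{0}) (α : SubT.{0}) : ℕ → Option (STy β) :=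
  (exists_enum (strace_countable q β α)).choose

lemma code_eq (q : SubT.{0} → QCond) (β : SubT.{0}) {α α' : SubT.{0}}
    (h : codeF q β α = codeF q β α') :
    cutF β '' (q α).F = cutF β '' (q α').F := by
  have h1 := (exists_enum (strace_countable q β α)).choose_spec
  have h2 := (exists_enum (strace_countable q β α')).choose_spec
  have h3 : (Subtype.val : STy β → Set (ℕ × ↥(Set.Iio β.1))) ⁻¹' (cutF β '' (q α).F) =
      (Subtype.val : STy β → Set (ℕ × ↥(Set.Iio β.1))) ⁻¹' (cutF β '' (q α').F) := by
    rw [h1, h2]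
    have h4 : (exists_enum (strace_countable q β α)).choose
        = (exists_enum (strace_countable q β α')).choose := h
    rw [h4]
  ext t
  constructor
  · rintro ⟨f, hf, rfl⟩
    have hm : (⟨cutF β f, cut_countable β hf⟩ : STy β) ∈
        (Subtype.val : STy β → Set (ℕ × ↥(Set.Iio β.1))) ⁻¹' (cutF β '' (q α).F) :=
      Set.mem_preimage.2 (Set.mem_image_of_mem _ hf)
    rw [h3] at hm
    exact hm
  · rintro ⟨f, hf, rfl⟩
    have hm : (⟨cutF β f, cut_countable β hf⟩ : STy β) ∈
        (Subtype.val : STy β → Set (ℕ × ↥(Set.Iio β.1))) ⁻¹' (cutF β '' (q α').F) :=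
      Set.mem_preimage.2 (Set.mem_image_of_mem _ hf)
    rw [← h3] at hm
    exact hm

lemma mk_STy (CH : Cardinal.continuum.{1} = Cardinal.aleph 1) (β : SubT.{0}) :
    #(STy β) ≤ Cardinal.aleph.{1} 1 := by
  have h1 : #(STy β) ≤ (#(ℕ × ↥(Set.Iio β.1)) + 1) ^ (ℵ₀ : Cardinal.{1}) :=
    mk_countable_le _
  have hYcard : #(ℕ × ↥(Set.Iio β.1)) ≤ Cardinal.aleph.{1} 1 := by
    have h2 : #(ℕ × ↥(Set.Iio β.1))
        = Cardinal.lift.{1} (#ℕ) * Cardinal.lift.{0} #(↥(Set.Iio β.1)) := mk_prod _ _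
    rw [h2, mk_nat, lift_aleph0, Cardinal.lift_uzero, Cardinal.mk_Iio_ordinal]
    calc ℵ₀ * Cardinal.lift.{1} (Ordinal.card β.1)
        ≤ Cardinal.aleph.{1} 1 * Cardinal.aleph.{1} 1 :=
          mul_le_mul' (aleph0_le_aleph 1) (card_le_aleph1_of_lt β.2)
      _ = Cardinal.aleph.{1} 1 := mul_eq_self (aleph0_le_aleph 1)
  calc #(STy β) ≤ (#(ℕ × ↥(Set.Iio β.1)) + 1) ^ (ℵ₀ : Cardinal.{1}) := h1
    _ ≤ (Cardinal.aleph.{1} 1 + 1) ^ (ℵ₀ : Cardinal.{1}) :=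
        power_le_power_right (add_le_add_left hYcard 1)
    _ = (Cardinal.aleph.{1} 1) ^ (ℵ₀ : Cardinal.{1}) := by rw [aleph1_add_one]
    _ = Cardinal.aleph.{1} 1 := aleph1_power_aleph0 CH

lemma mk_code_target (CH : Cardinal.continuum.{1} = Cardinal.aleph 1) (β : SubT.{0}) :
    #(ℕ → Option (STy β)) ≤ Cardinal.aleph.{1} 1 := by
  rw [mk_fun_nat_option]
  calc (#(STy β) + 1) ^ (ℵ₀ : Cardinal.{1})
      ≤ (Cardinal.aleph.{1} 1 + 1) ^ (ℵ₀ : Cardinal.{1}) :=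
        power_le_power_right (add_le_add_left (mk_STy CH β) 1)
    _ = (Cardinal.aleph.{1} 1) ^ (ℵ₀ : Cardinal.{1}) := by rw [aleph1_add_one]
    _ = Cardinal.aleph.{1} 1 := aleph1_power_aleph0 CH

/-- Strong chain condition, single-universe core version. -/
lemma core (CH : Cardinal.continuum.{1} = Cardinal.aleph 1) (q : SubT.{0} → QCond) :
    ∃ A : Set (SubT.{0}), #A = Cardinal.aleph.{1} 2 ∧
      ∀ F : Finset (SubT.{0}), ↑F ⊆ A → ∃ r : QCond, ∀ a ∈ F, QLe r (q a) := by
  classical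
  obtain ⟨β, hβ⟩ := lemmaA q
  set B : Set (SubT.{0}) := {α | Good q α ∧ Tail q β α} with hB
  have mkB : #B = Cardinal.aleph.{1} 2 := by
    refine le_antisymm (le_trans (mk_set_le B) mk_SubT.le) ?_
    by_contra hc
    have h1 : #B ≤ Cardinal.aleph.{1} 1 := by
      rw [← Order.lt_succ_iff, ← aleph_two_eq_succ]
      exact lt_of_not_ge hc
    have hVsub : Subtype.val '' B ⊆ Set.Iio (Cardinal.aleph.{0} 2).ord := by
      rintro ξ ⟨α, _, rfl⟩; exact α.2
    have hVcard : #(Subtype.val '' B) ≤ Cardinal.aleph.{1} 1 := le_trans mk_image_le h1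
    obtain ⟨b, hb1, hb2⟩ := exists_ub_omega2 hVsub hVcard
    obtain ⟨α, hα1, hα2, hα3⟩ := hβ b hb2
    exact absurd (hb1 α.1 ⟨α, ⟨hα2, hα3⟩, rfl⟩) (not_le.2 hα1)
  -- pigeonhole on the codes
  obtain ⟨c0, A, hAB, hθA, hcA⟩ := Cardinal.infinite_pigeonhole_set
    (fun x : ↥B => codeF q β x.1) (Cardinal.aleph.{1} 2) mkB.ge (aleph0_le_aleph 2)
    (by
      rw [(by rw [two_eq_succ_one]; exact (isRegular_aleph_succ 1).cof_eq :
        ((Cardinal.aleph.{1} 2).ord).cof = Cardinal.aleph.{1} 2)]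
      exact lt_of_le_of_lt (mk_code_target CH β) aleph_one_lt_aleph_two)
  have hcode_eq : ∀ a ∈ A, ∀ a' ∈ A, cutF β '' (q a).F = cutF β '' (q a').F := by
    intro a ha a' ha'
    exact code_eq q β (by rw [hcA ha, hcA ha'])
  refine ⟨A, le_antisymm (le_trans (mk_set_le A) mk_SubT.le) hθA, ?_⟩
  intro F hFsub
  -- the amalgamated condition
  refine ⟨⟨⋃ a ∈ (F : Set (SubT.{0})), (q a).D, ⋃ a ∈ (F : Set (SubT.{0})), (q a).F,
      ?_, ?_, ?_, ?_, ?_, ?_⟩, ?_⟩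
  · exact Set.Countable.biUnion F.countable_toSet (fun a _ => (q a).hDc)
  · intro ξ hξ
    obtain ⟨a, _, hξa⟩ := Set.mem_iUnion₂.1 hξ
    exact (q a).hD ξ hξa
  · exact Set.Countable.biUnion F.countable_toSet (fun a _ => (q a).hFc)
  · intro f hf x hx
    obtain ⟨a, ha, hfa⟩ := Set.mem_iUnion₂.1 hf
    exact Set.mem_biUnion ha ((q a).hdom f hfa x hx)
  · intro f hf x hx y hy hxy
    obtain ⟨a, _, hfa⟩ := Set.mem_iUnion₂.1 hf
    exact (q a).hfun f hfa x hx y hy hxy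
  · intro i ξ hξ
    obtain ⟨a, ha, hξa⟩ := Set.mem_iUnion₂.1 hξ
    exact Set.mem_biUnion ha ((q a).hsing i ξ hξa)
  · intro a ha
    have haA : a ∈ A := hFsub ha
    refine ⟨fun ξ hξ => Set.mem_biUnion ha hξ, fun f hf => Set.mem_biUnion ha hf, ?_⟩
    intro f hf
    obtain ⟨a', ha', hfa'⟩ := Set.mem_iUnion₂.1 hf
    by_cases haa : a' = a
    · subst haa
      exact ⟨f, hfa', fun x hx _ => hx⟩
    · have ha'A : a' ∈ A := hFsub ha'
      have hGa : Good q a ∧ Tail q β a := hAB haA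
      have hGa' : Good q a' ∧ Tail q β a' := hAB ha'A
      have hkey : ∀ x ∈ f, x.2 ∈ (q a).D → x.2 < β.1 := by
        intro x hx hxa
        have hxa' : x.2 ∈ (q a').D := (q a').hdom f hfa' x hx
        rcases lt_trichotomy a.1 a'.1 with h | h | h
        · exact hGa'.2 x.2 hxa' (hGa'.1 a h x.2 hxa)
        · exact absurd (Subtype.ext h) (fun hh => haa hh.symm)
        · exact hGa.2 x.2 hxa (hGa.1 a' h x.2 hxa')
      have hmem : cutF β f ∈ cutF β '' (q a).F := by
        rw [hcode_eq a haA a' ha'A]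
        exact Set.mem_image_of_mem _ hfa'
      obtain ⟨g, hg, hgf⟩ := hmem
      refine ⟨g, hg, ?_⟩
      intro x hx hxa
      have hxβ : x.2 < β.1 := hkey x hx hxa
      have hp : ((x.1, ⟨x.2, hxβ⟩) : ℕ × ↥(Set.Iio β.1)) ∈ cutF β f := by
        simp only [cutF, Set.mem_setOf_eq]
        exact hx
      rw [← hgf] at hp
      simpa only [cutF, Set.mem_setOf_eq] using hp

lemma subT_equiv : Nonempty (SubT.{u} ≃ SubT.{v}) := by
  rw [← Cardinal.lift_mk_eq'.{u+1, v+1}]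
  rw [mk_SubT, mk_SubT, lift_aleph_two, lift_aleph_two]

end Core
/-- Under CH, `ℚ` satisfies a strong `ω₂`-chain condition: any `ω₂`-indexed family of
conditions has a subfamily of cardinality `ω₂` any finitely many members of which have a
common lower bound; in particular `ℚ` has no antichain of cardinality `ω₂`. -/
theorem stmt_17 (CH : Cardinal.continuum = Cardinal.aleph 1) :
    (∀ q : {o : Ordinal // o < (Cardinal.aleph 2).ord} → QCond,
      ∃ A : Set {o : Ordinal // o < (Cardinal.aleph 2).ord},
        Cardinal.mk A = Cardinal.aleph 2 ∧
        ∀ F : Finset {o : Ordinal // o < (Cardinal.aleph 2).ord}, ↑F ⊆ A →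
          ∃ r : QCond, ∀ a ∈ F, QLe r (q a)) ∧
    (¬ ∃ S : Set QCond, Cardinal.mk S = Cardinal.aleph 2 ∧
      ∀ a ∈ S, ∀ b ∈ S, a ≠ b → ¬ ∃ c : QCond, QLe c a ∧ QLe c b) := by
  classical
  constructor
  · -- strong chain condition
    intro q
    obtain ⟨φ⟩ := subT_equiv
    obtain ⟨A', hA', hcomp⟩ := core (CH_transfer CH) (fun a => q (φ a))
    refine ⟨φ '' A', ?_, ?_⟩
    · have e := (Equiv.Set.image φ A' φ.injective).symm
      have h1 := Cardinal.lift_mk_eq'.2 ⟨e⟩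
      rw [hA'] at h1
      apply Cardinal.lift_injective
      rw [h1, lift_aleph_two, lift_aleph_two]
    · intro F hF
      have hF' : ↑(F.image φ.symm) ⊆ A' := by
        intro x hx
        obtain ⟨y, hy, rfl⟩ := Finset.mem_image.1 (by exact_mod_cast hx)
        obtain ⟨z, hz, rfl⟩ := hF hy
        rwa [Equiv.symm_apply_apply]
      obtain ⟨r, hr⟩ := hcomp (F.image φ.symm) hF'
      refine ⟨r, fun b hb => ?_⟩
      have hb' : φ.symm b ∈ F.image φ.symm := Finset.mem_image_of_mem _ hb
      have := hr _ hb'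
      simpa using this
  · -- no antichain of size ℵ₂
    rintro ⟨S, hS, hanti⟩
    have hne : Nonempty (SubT ≃ ↥S) := Cardinal.eq.1 (by rw [mk_SubT, hS])
    obtain ⟨ψ⟩ := hne
    obtain ⟨A, hA, hcomp⟩ := core (CH_transfer CH) (fun a => (ψ a).1)
    have hnt : Nontrivial ↥A := by
      rw [← Cardinal.one_lt_iff_nontrivial, hA]
      exact lt_of_lt_of_le Cardinal.one_lt_aleph0 (aleph0_le_aleph 2)
    obtain ⟨x, y, hxy⟩ := hnt.exists_pair_ne
    have hab : x.1 ≠ y.1 := fun h => hxy (Subtype.ext h)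
    have hFsub : ↑({x.1, y.1} : Finset SubT) ⊆ A := by
      intro z hz
      rcases Finset.mem_insert.1 (by exact_mod_cast hz) with rfl | hz'
      · exact x.2
      · rw [Finset.mem_singleton.1 hz']
        exact y.2
    obtain ⟨r, hr⟩ := hcomp {x.1, y.1} hFsub
    have hra := hr x.1 (Finset.mem_insert_self _ _)
    have hrb := hr y.1 (Finset.mem_insert_of_mem (Finset.mem_singleton_self _))
    have hqq : (ψ x.1).1 ≠ (ψ y.1).1 := by
      intro h
      exact hab (ψ.injective (Subtype.ext h))
    exact hanti (ψ x.1).1 (ψ x.1).2 (ψ y.1).1 (ψ y.1).2 hqq ⟨r, hra, hrb⟩
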